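/- Let X, Y be random variables with values in a Borel space (S,S), A a sub-sigma-field, and let {A_1,...,A_I} ⊂ A, {S_1,...,S_J} ⊂ S be finite partitions of Ω and S respectively. Then Σ_{i=1}^I Σ_{j=1}^J |P(A_i ∩ {X ∈ S_j}) − P(A_i)P(X ∈ S_j)| ≤ 4·P(X ≠ Y) + 2·beta(A, σ(Y); P). -/

import Mathlib

open MeasureTheory ProbabilityTheory Filter Set

/-- The absolute regularity (β-mixing) coefficient between two sub-σ-fields. -/
noncomputable def betaMix {Ω : Type*} {mΩ : MeasurableSpace Ω} (P : Measure Ω)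
    (𝓐 𝓑 : MeasurableSpace Ω) : ℝ :=
  sSup { x : ℝ | ∃ (I J : ℕ) (f : Fin I → Set Ω) (g : Fin J → Set Ω),
    (∀ i, MeasurableSet[𝓐] (f i)) ∧ (∀ j, MeasurableSet[𝓑] (g j)) ∧
    Pairwise (Function.onFun Disjoint f) ∧ (⋃ i, f i) = Set.univ ∧
    Pairwise (Function.onFun Disjoint g) ∧ (⋃ j, g j) = Set.univ ∧
    x = (1/2) * ∑ i, ∑ j,
      |(P (f i ∩ g j)).toReal - (P (f i)).toReal * (P (g j)).toReal| }

/-- The strong mixing (α) coefficient between two sub-σ-fields. -/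
noncomputable def alphaMix {Ω : Type*} {mΩ : MeasurableSpace Ω} (P : Measure Ω)
    (𝓐 𝓑 : MeasurableSpace Ω) : ℝ :=
  sSup { x : ℝ | ∃ (A B : Set Ω), MeasurableSet[𝓐] A ∧ MeasurableSet[𝓑] B ∧
    x = |(P (A ∩ B)).toReal - (P A).toReal * (P B).toReal| }

/-- β mixing coefficient of a two-sided sequence with gap `n`. -/
noncomputable def betaSeq {Ω E : Type*} {mΩ : MeasurableSpace Ω} [MeasurableSpace E]
    (X : ℤ → Ω → E) (n : ℕ) (P : Measure Ω) : ℝ :=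
  betaMix P (⨆ k : {k : ℤ // k ≤ 0}, MeasurableSpace.comap (X k) inferInstance)
            (⨆ k : {k : ℤ // (n : ℤ) ≤ k}, MeasurableSpace.comap (X k) inferInstance)

/-- α mixing coefficient of a two-sided sequence with gap `n`. -/
noncomputable def alphaSeq {Ω E : Type*} {mΩ : MeasurableSpace Ω} [MeasurableSpace E]
    (X : ℤ → Ω → E) (n : ℕ) (P : Measure Ω) : ℝ :=
  alphaMix P (⨆ k : {k : ℤ // k ≤ 0}, MeasurableSpace.comap (X k) inferInstance)
             (⨆ k : {k : ℤ // (n : ℤ) ≤ k}, MeasurableSpace.comap (X k) inferInstance)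

/-- Strict stationarity of a two-sided sequence. -/
def IsStationary' {Ω E : Type*} {mΩ : MeasurableSpace Ω} [MeasurableSpace E]
    (P : Measure Ω) (X : ℤ → Ω → E) : Prop :=
  ∀ j : ℤ, P.map (fun ω => fun k : ℤ => X (k + j) ω) = P.map (fun ω => fun k : ℤ => X k ω)


lemma part_sum {Ω : Type*} {mΩ : MeasurableSpace Ω} (P : Measure Ω) [IsProbabilityMeasure P]
    {n : ℕ} {f : Fin n → Set Ω} (hm : ∀ i, MeasurableSet (f i))
    (hd : Pairwise (Function.onFun Disjoint f)) (hc : (⋃ i, f i) = Set.univ)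
    {B : Set Ω} (hB : MeasurableSet B) :
    ∑ i, (P (f i ∩ B)).toReal = (P B).toReal := by
  have h1 : P (⋃ i, f i ∩ B) = ∑' i, P (f i ∩ B) :=
    measure_iUnion (fun i j h => ((hd h).mono inter_subset_left inter_subset_left))
      (fun i => (hm i).inter hB)
  have h2 : (⋃ i, f i ∩ B) = B := by rw [← iUnion_inter, hc, univ_inter]
  rw [h2, tsum_fintype] at h1
  rw [h1, ENNReal.toReal_sum (fun i _ => measure_ne_top P _)]

lemma part_sum_one {Ω : Type*} {mΩ : MeasurableSpace Ω} (P : Measure Ω) [IsProbabilityMeasure P]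
    {n : ℕ} {f : Fin n → Set Ω} (hm : ∀ i, MeasurableSet (f i))
    (hd : Pairwise (Function.onFun Disjoint f)) (hc : (⋃ i, f i) = Set.univ) :
    ∑ i, (P (f i)).toReal = 1 := by
  have := part_sum P hm hd hc (B := Set.univ) MeasurableSet.univ
  simpa using this

lemma betaMix_mem_le_one {Ω : Type*} {mΩ : MeasurableSpace Ω} (P : Measure Ω)
    [IsProbabilityMeasure P] (𝓐 𝓑 : MeasurableSpace Ω) (hA : 𝓐 ≤ mΩ) (hB : 𝓑 ≤ mΩ)
    {x : ℝ} (hx : x ∈ { x : ℝ | ∃ (I J : ℕ) (f : Fin I → Set Ω) (g : Fin J → Set Ω),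
    (∀ i, MeasurableSet[𝓐] (f i)) ∧ (∀ j, MeasurableSet[𝓑] (g j)) ∧
    Pairwise (Function.onFun Disjoint f) ∧ (⋃ i, f i) = Set.univ ∧
    Pairwise (Function.onFun Disjoint g) ∧ (⋃ j, g j) = Set.univ ∧
    x = (1/2) * ∑ i, ∑ j,
      |(P (f i ∩ g j)).toReal - (P (f i)).toReal * (P (g j)).toReal| }) : x ≤ 1 := by
  obtain ⟨I, J, f, g, hf, hg, hfd, hfc, hgd, hgc, rfl⟩ := hx
  have hf' : ∀ i, MeasurableSet[mΩ] (f i) := fun i => hA _ (hf i)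
  have hg' : ∀ j, MeasurableSet[mΩ] (g j) := fun j => hB _ (hg j)
  have key : ∀ i j, |(P (f i ∩ g j)).toReal - (P (f i)).toReal * (P (g j)).toReal|
      ≤ (P (f i ∩ g j)).toReal + (P (f i)).toReal * (P (g j)).toReal := by
    intro i j
    have h1 : (0:ℝ) ≤ (P (f i ∩ g j)).toReal := ENNReal.toReal_nonneg
    have h2 : (0:ℝ) ≤ (P (f i)).toReal * (P (g j)).toReal :=
      mul_nonneg ENNReal.toReal_nonneg ENNReal.toReal_nonneg
    rw [abs_sub_le_iff]; constructor <;> linarith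
  calc (1/2 : ℝ) * ∑ i, ∑ j, |(P (f i ∩ g j)).toReal - (P (f i)).toReal * (P (g j)).toReal|
      ≤ (1/2) * ∑ i, ∑ j,
        ((P (f i ∩ g j)).toReal + (P (f i)).toReal * (P (g j)).toReal) := by
        gcongr with i _ j _; exact key i j
    _ = 1 := by
        rw [show (∑ i, ∑ j, ((P (f i ∩ g j)).toReal + (P (f i)).toReal * (P (g j)).toReal))
            = (∑ i, ∑ j, (P (f i ∩ g j)).toReal)
              + (∑ i, (P (f i)).toReal) * (∑ j, (P (g j)).toReal) by
          rw [Finset.sum_mul_sum]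
          rw [← Finset.sum_add_distrib]
          congr 1; ext i
          rw [← Finset.sum_add_distrib]]
        have e1 : ∑ i, ∑ j, (P (f i ∩ g j)).toReal = 1 := by
          have : ∀ i, ∑ j, (P (f i ∩ g j)).toReal = (P (f i)).toReal := by
            intro i
            have := part_sum P hg' hgd hgc (hf' i)
            simpa [Set.inter_comm] using this
          rw [Finset.sum_congr rfl (fun i _ => this i)]
          exact part_sum_one P hf' hfd hfc
        rw [e1, part_sum_one P hf' hfd hfc, part_sum_one P hg' hgd hgc]
        norm_num

lemma abs_inter_diff {Ω : Type*} {mΩ : MeasurableSpace Ω} (P : Measure Ω)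
    [IsProbabilityMeasure P] (E C B : Set Ω) :
    |(P (E ∩ C)).toReal - (P (E ∩ B)).toReal|
      ≤ (P (E ∩ (C \ B))).toReal + (P (E ∩ (B \ C))).toReal := by
  have key : ∀ C' B' : Set Ω, P (E ∩ C') ≤ P (E ∩ B') + P (E ∩ (C' \ B')) := by
    intro C' B'
    refine le_trans (measure_mono ?_) (measure_union_le _ _)
    intro x hx
    by_cases h : x ∈ B'
    · exact Or.inl ⟨hx.1, h⟩
    · exact Or.inr ⟨hx.1, hx.2, h⟩
  have tr : ∀ C' B' : Set Ω, (P (E ∩ C')).toReal ≤ (P (E ∩ B')).toReal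
      + (P (E ∩ (C' \ B'))).toReal := by
    intro C' B'
    rw [← ENNReal.toReal_add (measure_ne_top P _) (measure_ne_top P _)]
    exact ENNReal.toReal_mono (by finiteness) (key C' B')
  have h1 := tr C B
  have h2 := tr B C
  have p1 : (0:ℝ) ≤ (P (E ∩ (C \ B))).toReal := ENNReal.toReal_nonneg
  have p2 : (0:ℝ) ≤ (P (E ∩ (B \ C))).toReal := ENNReal.toReal_nonneg
  rw [abs_sub_le_iff]; constructor <;> linarith
/-- Σᵢ Σⱼ |P(Aᵢ ∩ {X ∈ Sⱼ}) − P(Aᵢ)P(X ∈ Sⱼ)| ≤ 4 P(X≠Y) + 2 β(𝓐,σ(Y);P). -/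
theorem stmt4 {Ω S : Type*} {mΩ : MeasurableSpace Ω} [MeasurableSpace S]
    (P : Measure Ω) [IsProbabilityMeasure P]
    (X Y : Ω → S) (hX : Measurable X) (hY : Measurable Y)
    (𝓐 : MeasurableSpace Ω) (h𝓐 : 𝓐 ≤ mΩ)
    (I J : ℕ) (A : Fin I → Set Ω) (Sp : Fin J → Set S)
    (hA : ∀ i, MeasurableSet[𝓐] (A i)) (hAdisj : Pairwise (Function.onFun Disjoint A))
    (hAcover : (⋃ i, A i) = Set.univ)
    (hS : ∀ j, MeasurableSet (Sp j)) (hSdisj : Pairwise (Function.onFun Disjoint Sp))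
    (hScover : (⋃ j, Sp j) = Set.univ) :
    ∑ i, ∑ j, |(P (A i ∩ X ⁻¹' Sp j)).toReal - (P (A i)).toReal * (P (X ⁻¹' Sp j)).toReal|
      ≤ 4 * (P {ω | X ω ≠ Y ω}).toReal
        + 2 * betaMix P 𝓐 (MeasurableSpace.comap Y inferInstance) := by
  set C : Fin J → Set Ω := fun j => X ⁻¹' Sp j with hCdef
  set B : Fin J → Set Ω := fun j => Y ⁻¹' Sp j with hBdef
  set D : Set Ω := {ω | X ω ≠ Y ω} with hDdef
  have hA' : ∀ i, MeasurableSet[mΩ] (A i) := fun i => h𝓐 _ (hA i)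
  have hC' : ∀ j, MeasurableSet[mΩ] (C j) := fun j => hX (hS j)
  have hB' : ∀ j, MeasurableSet[mΩ] (B j) := fun j => hY (hS j)
  have hBdisj : Pairwise (Function.onFun Disjoint B) := fun j k h => (hSdisj h).preimage Y
  have hCdisj : Pairwise (Function.onFun Disjoint C) := fun j k h => (hSdisj h).preimage X
  have hBcover : (⋃ j, B j) = Set.univ := by
    rw [hBdef, ← preimage_iUnion, hScover, preimage_univ]
  have hCB_sub : ∀ j, C j \ B j ⊆ D := by
    rintro j ω ⟨h1, h2⟩ h
    exact h2 (Set.mem_preimage.mpr (h ▸ Set.mem_preimage.mp h1))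
  have hBC_sub : ∀ j, B j \ C j ⊆ D := by
    rintro j ω ⟨h1, h2⟩ h
    exact h2 (Set.mem_preimage.mpr (h.symm ▸ Set.mem_preimage.mp h1))
  -- two key sums bounded by P D
  have sum_diff_le : ∀ (f : Fin J → Set Ω), (∀ j, MeasurableSet[mΩ] (f j)) →
      Pairwise (Function.onFun Disjoint f) → (∀ j, f j ⊆ D) →
      ∑ j, (P (f j)).toReal ≤ (P D).toReal := by
    intro f hm hd hsub
    have h0 : ∑ j, P (f j) = P (⋃ j, f j) := by
      rw [measure_iUnion hd hm, tsum_fintype]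
    rw [← ENNReal.toReal_sum (fun j _ => measure_ne_top P _), h0]
    exact ENNReal.toReal_mono (measure_ne_top P _) (measure_mono (iUnion_subset hsub))
  have hCBd : Pairwise (Function.onFun Disjoint fun j => C j \ B j) :=
    fun j k h => ((hCdisj h).mono diff_subset diff_subset)
  have hBCd : Pairwise (Function.onFun Disjoint fun j => B j \ C j) :=
    fun j k h => ((hBdisj h).mono diff_subset diff_subset)
  have key1 : ∑ j, (P (C j \ B j)).toReal ≤ (P D).toReal :=
    sum_diff_le _ (fun j => (hC' j).diff (hB' j)) hCBd hCB_sub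
  have key2 : ∑ j, (P (B j \ C j)).toReal ≤ (P D).toReal :=
    sum_diff_le _ (fun j => (hB' j).diff (hC' j)) hBCd hBC_sub
  -- S1 : the β term
  set s1 : ℝ := ∑ i, ∑ j, |(P (A i ∩ B j)).toReal - (P (A i)).toReal * (P (B j)).toReal|
    with hs1
  have hβ : (1/2) * s1 ≤ betaMix P 𝓐 (MeasurableSpace.comap Y inferInstance) := by
    refine le_csSup ⟨1, fun x hx => betaMix_mem_le_one P _ _ h𝓐 hY.comap_le hx⟩ ?_
    exact ⟨I, J, A, B, hA, fun j => ⟨Sp j, hS j, rfl⟩, hAdisj, hAcover, hBdisj, hBcover, rfl⟩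
  -- S2 : perturbation of joint probabilities
  have hS2 : ∑ i, ∑ j, |(P (A i ∩ C j)).toReal - (P (A i ∩ B j)).toReal|
      ≤ 2 * (P D).toReal := by
    calc ∑ i, ∑ j, |(P (A i ∩ C j)).toReal - (P (A i ∩ B j)).toReal|
        ≤ ∑ i, ∑ j, ((P (A i ∩ (C j \ B j))).toReal + (P (A i ∩ (B j \ C j))).toReal) := by
          gcongr with i _ j _; exact abs_inter_diff P _ _ _
      _ = ∑ j, ∑ i, ((P (A i ∩ (C j \ B j))).toReal + (P (A i ∩ (B j \ C j))).toReal) :=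
          Finset.sum_comm
      _ = ∑ j, ((P (C j \ B j)).toReal + (P (B j \ C j)).toReal) := by
          refine Finset.sum_congr rfl fun j _ => ?_
          rw [Finset.sum_add_distrib,
            part_sum P hA' hAdisj hAcover ((hC' j).diff (hB' j)),
            part_sum P hA' hAdisj hAcover ((hB' j).diff (hC' j))]
      _ = (∑ j, (P (C j \ B j)).toReal) + ∑ j, (P (B j \ C j)).toReal :=
          Finset.sum_add_distrib
      _ ≤ 2 * (P D).toReal := by linarith
  -- S3 : perturbation of marginals
  have habsj : ∀ j, |(P (B j)).toReal - (P (C j)).toReal|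
      ≤ (P (B j \ C j)).toReal + (P (C j \ B j)).toReal := by
    intro j
    have := abs_inter_diff P Set.univ (B j) (C j)
    simpa [Set.univ_inter] using this
  have hS3 : ∑ i, ∑ j, (P (A i)).toReal * |(P (B j)).toReal - (P (C j)).toReal|
      ≤ 2 * (P D).toReal := by
    rw [← Finset.sum_mul_sum, part_sum_one P hA' hAdisj hAcover, one_mul]
    calc ∑ j, |(P (B j)).toReal - (P (C j)).toReal|
        ≤ ∑ j, ((P (B j \ C j)).toReal + (P (C j \ B j)).toReal) := by
          gcongr with j _; exact habsj j
      _ = (∑ j, (P (B j \ C j)).toReal) + ∑ j, (P (C j \ B j)).toReal :=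
          Finset.sum_add_distrib
      _ ≤ 2 * (P D).toReal := by linarith
  -- termwise triangle inequality
  have tri : ∀ i j, |(P (A i ∩ C j)).toReal - (P (A i)).toReal * (P (C j)).toReal|
      ≤ |(P (A i ∩ C j)).toReal - (P (A i ∩ B j)).toReal|
        + |(P (A i ∩ B j)).toReal - (P (A i)).toReal * (P (B j)).toReal|
        + (P (A i)).toReal * |(P (B j)).toReal - (P (C j)).toReal| := by
    intro i j
    have h3 : (P (A i)).toReal * |(P (B j)).toReal - (P (C j)).toReal|
        = |(P (A i)).toReal * (P (B j)).toReal - (P (A i)).toReal * (P (C j)).toReal| := by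
      rw [← mul_sub, abs_mul, abs_of_nonneg ENNReal.toReal_nonneg]
    rw [h3]
    have := abs_sub_le ((P (A i ∩ C j)).toReal) ((P (A i ∩ B j)).toReal)
      ((P (A i)).toReal * (P (C j)).toReal)
    have h2 := abs_sub_le ((P (A i ∩ B j)).toReal)
      ((P (A i)).toReal * (P (B j)).toReal) ((P (A i)).toReal * (P (C j)).toReal)
    linarith
  calc ∑ i, ∑ j, |(P (A i ∩ C j)).toReal - (P (A i)).toReal * (P (C j)).toReal|
      ≤ ∑ i, ∑ j, (|(P (A i ∩ C j)).toReal - (P (A i ∩ B j)).toReal|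
        + |(P (A i ∩ B j)).toReal - (P (A i)).toReal * (P (B j)).toReal|
        + (P (A i)).toReal * |(P (B j)).toReal - (P (C j)).toReal|) := by
        gcongr with i _ j _; exact tri i j
    _ = (∑ i, ∑ j, |(P (A i ∩ C j)).toReal - (P (A i ∩ B j)).toReal|) + s1
        + ∑ i, ∑ j, (P (A i)).toReal * |(P (B j)).toReal - (P (C j)).toReal| := by
        rw [hs1]
        simp only [Finset.sum_add_distrib]
    _ ≤ 4 * (P D).toReal + 2 * betaMix P 𝓐 (MeasurableSpace.comap Y inferInstance) := by
        linarith
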